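/- Fix θ ≥ 1, C > 0, p_min > 0, p_max = θ·p_min. For any sequence of concave, differentiable, increasing revenue functions g_t : [0, δ_t] → ℝ with g_t(0) = 0 and g_t' ∈ [p_min, p_max], and any π ≥ 1, the total allocation of the CR-Pursuit(π) algorithm (defined by g_t(v̂_t) = (1/π)(OPT(t) − OPT(t−1)) where OPT(t) is the offline optimum up to slot t with capacity C and rate limits δ_t) satisfies Σ_t v̂_t ≤ ((ln θ + 1)/π) · C. -/

import Mathlib

open Set Filter MeasureTheory intervalIntegral Topology

namespace CRP

variable {G G' : ℝ → ℝ} {d pmin pmax : ℝ}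

/-- secant slopes of a concave function through a fixed point are antitone -/
lemma secant_anti (hcon : ConcaveOn ℝ (Icc 0 d) G) {a x y : ℝ}
    (ha : a ∈ Icc 0 d) (hx : x ∈ Icc 0 d) (hy : y ∈ Icc 0 d)
    (hxa : x ≠ a) (hya : y ≠ a) (hxy : x ≤ y) :
    (G y - G a) / (y - a) ≤ (G x - G a) / (x - a) := by
  have h := hcon.neg.secant_mono ha hx hy hxa hya hxy
  simp only [Pi.neg_apply] at h
  have e1 : (-G x - -G a) / (x - a) = -((G x - G a) / (x - a)) := by ring
  have e2 : (-G y - -G a) / (y - a) = -((G y - G a) / (y - a)) := by ring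
  rw [e1, e2, neg_le_neg_iff] at h
  exact h

lemma deriv_le_slope (hcon : ConcaveOn ℝ (Icc 0 d) G)
    (hder : ∀ x ∈ Icc 0 d, HasDerivWithinAt G (G' x) (Icc 0 d) x)
    {a b : ℝ} (ha : a ∈ Icc 0 d) (hb : b ∈ Icc 0 d) (hab : a < b) :
    G' b ≤ (G b - G a) / (b - a) := by
  have htt : Tendsto (slope G b) (𝓝[Icc 0 d \ {b}] b) (𝓝 (G' b)) :=
    hasDerivWithinAt_iff_tendsto_slope.mp (hder b hb)
  have hsub : Ioo a b ⊆ Icc 0 d \ {b} := by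
    intro x hx
    exact ⟨⟨le_trans ha.1 hx.1.le, le_trans hx.2.le hb.2⟩, ne_of_lt hx.2⟩
  have htt' : Tendsto (slope G b) (𝓝[Ioo a b] b) (𝓝 (G' b)) :=
    htt.mono_left (nhdsWithin_mono b hsub)
  have hne : (𝓝[Ioo a b] b).NeBot := right_nhdsWithin_Ioo_neBot hab
  refine le_of_tendsto htt' ?_
  filter_upwards [self_mem_nhdsWithin] with x hx
  have hxm : x ∈ Icc 0 d := ⟨le_trans ha.1 hx.1.le, le_trans hx.2.le hb.2⟩
  have : (G x - G b) / (x - b) ≤ (G a - G b) / (a - b) :=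
    secant_anti hcon hb ha hxm (ne_of_lt hab) (ne_of_lt hx.2) hx.1.le
  · rw [slope_def_field]
    have e : (G a - G b) / (a - b) = (G b - G a) / (b - a) := by
      rw [div_eq_div_iff] <;> [ring; linarith; linarith]
    calc (G x - G b) / (x - b) ≤ (G a - G b) / (a - b) := this
    _ = (G b - G a) / (b - a) := e

lemma slope_le_deriv (hcon : ConcaveOn ℝ (Icc 0 d) G)
    (hder : ∀ x ∈ Icc 0 d, HasDerivWithinAt G (G' x) (Icc 0 d) x)
    {a b : ℝ} (ha : a ∈ Icc 0 d) (hb : b ∈ Icc 0 d) (hab : a < b) :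
    (G b - G a) / (b - a) ≤ G' a := by
  have htt : Tendsto (slope G a) (𝓝[Icc 0 d \ {a}] a) (𝓝 (G' a)) :=
    hasDerivWithinAt_iff_tendsto_slope.mp (hder a ha)
  have hsub : Ioo a b ⊆ Icc 0 d \ {a} := by
    intro x hx
    exact ⟨⟨le_trans ha.1 hx.1.le, le_trans hx.2.le hb.2⟩, (ne_of_gt hx.1)⟩
  have htt' : Tendsto (slope G a) (𝓝[Ioo a b] a) (𝓝 (G' a)) :=
    htt.mono_left (nhdsWithin_mono a hsub)
  have hne : (𝓝[Ioo a b] a).NeBot := left_nhdsWithin_Ioo_neBot hab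
  refine ge_of_tendsto htt' ?_
  filter_upwards [self_mem_nhdsWithin] with x hx
  have hxm : x ∈ Icc 0 d := ⟨le_trans ha.1 hx.1.le, le_trans hx.2.le hb.2⟩
  rw [slope_def_field]
  exact secant_anti hcon ha hxm hb (ne_of_gt hx.1) (ne_of_gt hab) hx.2.le

lemma deriv_anti (hcon : ConcaveOn ℝ (Icc 0 d) G)
    (hder : ∀ x ∈ Icc 0 d, HasDerivWithinAt G (G' x) (Icc 0 d) x)
    {a b : ℝ} (ha : a ∈ Icc 0 d) (hb : b ∈ Icc 0 d) (hab : a ≤ b) :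
    G' b ≤ G' a := by
  rcases eq_or_lt_of_le hab with rfl | h
  · exact le_refl _
  · exact le_trans (deriv_le_slope hcon hder ha hb h) (slope_le_deriv hcon hder ha hb h)

lemma tangent_le (hcon : ConcaveOn ℝ (Icc 0 d) G)
    (hder : ∀ x ∈ Icc 0 d, HasDerivWithinAt G (G' x) (Icc 0 d) x)
    {z x : ℝ} (hz : z ∈ Icc 0 d) (hx : x ∈ Icc 0 d) :
    G x ≤ G z + G' z * (x - z) := by
  rcases lt_trichotomy x z with h | rfl | h
  · have h1 : G' z ≤ (G z - G x) / (z - x) := deriv_le_slope hcon hder hx hz h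
    have h2 : 0 < z - x := by linarith
    nlinarith [(div_le_iff₀ h2).mp (le_refl ((G z - G x) / (z - x))), (le_div_iff₀ h2).mp h1]
  · simp
  · have h1 : (G x - G z) / (x - z) ≤ G' z := slope_le_deriv hcon hder hz hx h
    have h2 : 0 < x - z := by linarith
    nlinarith [(div_le_iff₀ h2).mp h1]

lemma sub_le_mul (hcon : ConcaveOn ℝ (Icc 0 d) G)
    (hder : ∀ x ∈ Icc 0 d, HasDerivWithinAt G (G' x) (Icc 0 d) x)
    (hgr : ∀ x ∈ Icc 0 d, G' x ∈ Icc pmin pmax)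
    {a b : ℝ} (ha : a ∈ Icc 0 d) (hb : b ∈ Icc 0 d) (hab : a ≤ b) :
    pmin * (b - a) ≤ G b - G a ∧ G b - G a ≤ pmax * (b - a) := by
  constructor
  · have := tangent_le hcon hder hb ha  -- G a ≤ G b + G' b * (a - b)
    have h2 := (hgr b hb).1
    nlinarith [sub_nonneg.mpr hab]
  · have := tangent_le hcon hder ha hb  -- G b ≤ G a + G' a * (b - a)
    have h2 := (hgr a ha).2
    nlinarith [sub_nonneg.mpr hab]

lemma g_bounds (hcon : ConcaveOn ℝ (Icc 0 d) G)
    (hder : ∀ x ∈ Icc 0 d, HasDerivWithinAt G (G' x) (Icc 0 d) x)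
    (hgr : ∀ x ∈ Icc 0 d, G' x ∈ Icc pmin pmax) (hG0 : G 0 = 0) (hd : 0 ≤ d)
    {x : ℝ} (hx : x ∈ Icc 0 d) :
    pmin * x ≤ G x ∧ G x ≤ pmax * x := by
  have h0 : (0:ℝ) ∈ Icc 0 d := ⟨le_refl _, hd⟩
  have := sub_le_mul hcon hder hgr h0 hx hx.1
  constructor <;> [nlinarith [this.1]; nlinarith [this.2]]

lemma slot_cont (hder : ∀ x ∈ Icc 0 d, HasDerivWithinAt G (G' x) (Icc 0 d) x) :
    ContinuousOn G (Icc 0 d) := fun x hx => (hder x hx).continuousWithinAt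

lemma slot_FTC (hcon : ConcaveOn ℝ (Icc 0 d) G)
    (hder : ∀ x ∈ Icc 0 d, HasDerivWithinAt G (G' x) (Icc 0 d) x)
    {a b : ℝ} (ha : a ∈ Icc 0 d) (hb : b ∈ Icc 0 d) (hab : a ≤ b) :
    ∫ y in a..b, G' y = G b - G a := by
  have hsub : Icc a b ⊆ Icc 0 d := Icc_subset_Icc ha.1 hb.2
  refine integral_eq_sub_of_hasDeriv_right_of_le hab
    ((slot_cont hder).mono hsub) (fun x hx => ?_) ?_
  · have hxm : x ∈ Icc 0 d := hsub (Ioo_subset_Icc_self hx)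
    have hxo : x ∈ Ioo 0 d := ⟨lt_of_le_of_lt ha.1 hx.1, lt_of_lt_of_le hx.2 hb.2⟩
    have : HasDerivAt G (G' x) x :=
      (hder x hxm).hasDerivAt (Icc_mem_nhds hxo.1 hxo.2)
    exact this.hasDerivWithinAt
  · refine AntitoneOn.intervalIntegrable ?_
    intro x hx y hy hxy
    rw [uIcc_of_le hab] at hx hy
    exact deriv_anti hcon hder (hsub hx) (hsub hy) hxy


noncomputable def Gf (G : ℝ → ℝ) (d u : ℝ) : ℝ := sSup ((fun x => G x - u * x) '' Icc 0 d)

lemma Gf_nonempty (hd : 0 ≤ d) : ((fun x => G x - u * x) '' Icc 0 d).Nonempty :=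
  ⟨G 0 - u * 0, ⟨0, ⟨le_refl _, hd⟩, rfl⟩⟩

lemma Gf_bddAbove (hub : ∀ x ∈ Icc 0 d, G x ≤ pmax * x) (hpmax : 0 ≤ pmax) (hu : 0 ≤ u) :
    BddAbove ((fun x => G x - u * x) '' Icc 0 d) := by
  refine ⟨pmax * d, ?_⟩
  rintro y ⟨x, hx, rfl⟩
  show G x - u * x ≤ pmax * d
  have h1 : G x ≤ pmax * x := hub x hx
  have h2 : pmax * x ≤ pmax * d := mul_le_mul_of_nonneg_left hx.2 hpmax
  nlinarith [mul_nonneg hu hx.1]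

lemma Gf_ge (hub : ∀ x ∈ Icc 0 d, G x ≤ pmax * x) (hpmax : 0 ≤ pmax) (hu : 0 ≤ u)
    {x : ℝ} (hx : x ∈ Icc 0 d) : G x - u * x ≤ Gf G d u :=
  le_csSup (Gf_bddAbove hub hpmax hu) ⟨x, hx, rfl⟩

lemma Gf_nonneg (hub : ∀ x ∈ Icc 0 d, G x ≤ pmax * x) (hpmax : 0 ≤ pmax) (hu : 0 ≤ u)
    (hG0 : G 0 = 0) (hd : 0 ≤ d) : 0 ≤ Gf G d u := by
  have := Gf_ge hub hpmax hu (x := 0) ⟨le_refl _, hd⟩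
  simpa [hG0] using this

lemma Gf_anti (hd : 0 ≤ d) (hub : ∀ x ∈ Icc 0 d, G x ≤ pmax * x) (hpmax : 0 ≤ pmax)
    {u u' : ℝ} (hu : 0 ≤ u) (huu : u ≤ u') : Gf G d u' ≤ Gf G d u := by
  refine csSup_le (Gf_nonempty hd) ?_
  rintro y ⟨x, hx, rfl⟩
  have : G x - u' * x ≤ G x - u * x := by nlinarith [hx.1]
  exact le_trans this (Gf_ge hub hpmax hu hx)

lemma Gf_le_tangent (hd : 0 ≤ d) (hcon : ConcaveOn ℝ (Icc 0 d) G)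
    (hder : ∀ x ∈ Icc 0 d, HasDerivWithinAt G (G' x) (Icc 0 d) x)
    {z u : ℝ} (hz : z ∈ Icc 0 d) (hzu : G' z ≤ u) :
    Gf G d u ≤ G z - G' z * z := by
  refine csSup_le (Gf_nonempty hd) ?_
  rintro y ⟨x, hx, rfl⟩
  show G x - u * x ≤ G z - G' z * z
  have ht := tangent_le hcon hder hz hx
  nlinarith [mul_nonneg (sub_nonneg.mpr hzu) hx.1]


lemma stepA (hd : 0 ≤ d) (hpmin : 0 < pmin) (hpp : pmin ≤ pmax)
    (hcon : ConcaveOn ℝ (Icc 0 d) G)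
    (hder : ∀ x ∈ Icc 0 d, HasDerivWithinAt G (G' x) (Icc 0 d) x)
    (hgr : ∀ x ∈ Icc 0 d, G' x ∈ Icc pmin pmax) (hG0 : G 0 = 0)
    {w : ℝ} (hw : w ∈ Icc 0 d) {u : ℝ} (hu : u ∈ Icc pmin pmax) :
    min (Gf G d u) (G w) ≤ ∫ y in (0:ℝ)..w, (if u ≤ G' y then G' y else 0) := by
  have hpmax : (0:ℝ) < pmax := lt_of_lt_of_le hpmin hpp
  have hWd : Icc 0 w ⊆ Icc 0 d := Icc_subset_Icc (le_refl _) hw.2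
  have hind : AntitoneOn (fun y => if u ≤ G' y then G' y else 0) (Icc 0 w) := by
    intro y1 h1 y2 h2 h12
    by_cases hc2 : u ≤ G' y2
    · have hc1 : u ≤ G' y1 := le_trans hc2 (deriv_anti hcon hder (hWd h1) (hWd h2) h12)
      simp only [if_pos hc1, if_pos hc2]
      exact deriv_anti hcon hder (hWd h1) (hWd h2) h12
    · simp only [if_neg hc2]
      by_cases hc1 : u ≤ G' y1
      · simp only [if_pos hc1]; exact le_trans hpmin.le (hgr y1 (hWd h1)).1
      · simp [hc1]
  by_cases hS : ({y | y ∈ Icc 0 w ∧ G' y ≤ u}).Nonempty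
  · obtain ⟨z0, hz0⟩ := hS
    have hbdd : BddBelow {y | y ∈ Icc 0 w ∧ G' y ≤ u} := ⟨0, fun z hz => hz.1.1⟩
    set Y := sInf {y | y ∈ Icc 0 w ∧ G' y ≤ u} with hYdef
    have hY0 : 0 ≤ Y := le_csInf ⟨z0, hz0⟩ fun z hz => hz.1.1
    have hYw : Y ≤ w := le_trans (csInf_le hbdd hz0) hz0.1.2
    have hYd : Y ∈ Icc 0 d := ⟨hY0, le_trans hYw hw.2⟩
    have claim1 : Gf G d u ≤ G Y := by
      refine le_of_forall_pos_le_add fun ε hε => ?_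
      have hlt : Y < Y + ε / pmax := lt_add_of_pos_right _ (div_pos hε hpmax)
      obtain ⟨z, hzS, hzlt⟩ := (csInf_lt_iff hbdd ⟨z0, hz0⟩).mp hlt
      have hzd : z ∈ Icc 0 d := hWd hzS.1
      have h1 : Gf G d u ≤ G z - G' z * z := Gf_le_tangent hd hcon hder hzd hzS.2
      have h2 : G z - G' z * z ≤ G z := by nlinarith [(hgr z hzd).1, hzS.1.1]
      have hYz : Y ≤ z := csInf_le hbdd hzS
      have h3 : G z - G Y ≤ pmax * (z - Y) := (sub_le_mul hcon hder hgr hYd hzd hYz).2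
      have h4 : pmax * (z - Y) ≤ ε := by
        have h5 : z - Y ≤ ε / pmax := by linarith
        calc pmax * (z - Y) ≤ pmax * (ε / pmax) := by nlinarith
        _ = ε := by field_simp
      linarith
    have int1 : IntervalIntegrable (fun y => if u ≤ G' y then G' y else 0) volume 0 Y := by
      refine AntitoneOn.intervalIntegrable ?_
      rw [uIcc_of_le hY0]
      exact hind.mono (Icc_subset_Icc (le_refl _) hYw)
    have int2 : IntervalIntegrable (fun y => if u ≤ G' y then G' y else 0) volume Y w := by
      refine AntitoneOn.intervalIntegrable ?_
      rw [uIcc_of_le hYw]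
      exact hind.mono (Icc_subset_Icc hY0 (le_refl _))
    have hYint : ∫ y in (0:ℝ)..Y, (if u ≤ G' y then G' y else 0) = G Y := by
      have hae : ∀ᵐ (y:ℝ), y ∉ ({Y} : Set ℝ) :=
        measure_eq_zero_iff_ae_notMem.mp (measure_singleton Y)
      have hcg : ∫ y in (0:ℝ)..Y, (if u ≤ G' y then G' y else 0) = ∫ y in (0:ℝ)..Y, G' y := by
        refine intervalIntegral.integral_congr_ae ?_
        filter_upwards [hae] with y hy hymem
        rw [uIoc_of_le hY0] at hymem
        have hyY : y < Y := lt_of_le_of_ne hymem.2 (by simpa using hy)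
        have hyw : y ∈ Icc 0 w := ⟨hymem.1.le, le_trans hyY.le hYw⟩
        have hnot : ¬ (G' y ≤ u) := fun hc =>
          absurd (csInf_le hbdd ⟨hyw, hc⟩) (not_le.mpr hyY)
        rw [if_pos (le_of_lt (not_le.mp hnot))]
      rw [hcg, slot_FTC hcon hder ⟨le_refl _, hd⟩ hYd hY0, hG0, sub_zero]
    have hrest : 0 ≤ ∫ y in Y..w, (if u ≤ G' y then G' y else 0) := by
      refine intervalIntegral.integral_nonneg hYw fun y hy => ?_
      by_cases hc : u ≤ G' y
      · simp only [if_pos hc]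
        exact le_trans hpmin.le (hgr y (hWd ⟨le_trans hY0 hy.1, hy.2⟩)).1
      · simp [hc]
    have hsplit := integral_add_adjacent_intervals int1 int2
    calc min (Gf G d u) (G w) ≤ Gf G d u := min_le_left _ _
      _ ≤ G Y := claim1
      _ ≤ ∫ y in (0:ℝ)..w, (if u ≤ G' y then G' y else 0) := by
          rw [← hsplit, hYint]; linarith
  · have hS' : ∀ y ∈ Icc 0 w, u < G' y := fun y hy =>
      not_le.mp (fun hle => hS ⟨y, hy, hle⟩)
    have heq : EqOn (fun y => if u ≤ G' y then G' y else 0) G' (uIcc 0 w) := by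
      intro y hy
      rw [uIcc_of_le hw.1] at hy
      simp only [if_pos (hS' y hy).le]
    rw [intervalIntegral.integral_congr heq,
        slot_FTC hcon hder ⟨le_refl _, hd⟩ hw hw.1, hG0, sub_zero]
    exact min_le_right _ _

lemma stepC {q pmin pmax : ℝ} (hpmin : 0 < pmin) (hpp : pmin ≤ pmax) (hq : q ∈ Icc pmin pmax) :
    ∫ u in pmin..pmax, (if u ≤ q then q / u ^ 2 else 0) = q / pmin - 1 := by
  have hq0 : 0 < q := lt_of_lt_of_le hpmin hq.1
  have hanti : ∀ a b : ℝ, 0 < a → AntitoneOn (fun u => if u ≤ q then q / u ^ 2 else 0) (Icc a b) := by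
    intro a b ha u1 h1 u2 h2 h12
    have hu1 : 0 < u1 := lt_of_lt_of_le ha h1.1
    have hu2 : 0 < u2 := lt_of_lt_of_le ha h2.1
    by_cases hc1 : u1 ≤ q
    · by_cases hc2 : u2 ≤ q
      · simp only [if_pos hc1, if_pos hc2]
        apply div_le_div₀ hq0.le (le_refl q) (by positivity) (by nlinarith)
      · simp only [if_pos hc1, if_neg hc2]; positivity
    · have hc2 : ¬ u2 ≤ q := fun h => hc1 (le_trans h12 h)
      simp [hc1, hc2]
  have int1 : IntervalIntegrable (fun u => if u ≤ q then q / u ^ 2 else 0) volume pmin q := by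
    refine AntitoneOn.intervalIntegrable ?_
    rw [uIcc_of_le hq.1]; exact hanti pmin q hpmin
  have int2 : IntervalIntegrable (fun u => if u ≤ q then q / u ^ 2 else 0) volume q pmax := by
    refine AntitoneOn.intervalIntegrable ?_
    rw [uIcc_of_le hq.2]; exact hanti q pmax hq0
  have h1 : ∫ u in pmin..q, (if u ≤ q then q / u ^ 2 else 0) = q / pmin - 1 := by
    have heq : EqOn (fun u => if u ≤ q then q / u ^ 2 else 0) (fun u => q / u ^ 2)
        (uIcc pmin q) := by
      intro x hx
      rw [uIcc_of_le hq.1] at hx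
      simp only [if_pos hx.2]
    rw [intervalIntegral.integral_congr heq]
    have hder : ∀ u ∈ uIcc pmin q, HasDerivAt (fun v => -(q * v⁻¹)) (q / u ^ 2) u := by
      intro x hx
      rw [uIcc_of_le hq.1] at hx
      have hx0 : x ≠ 0 := ne_of_gt (lt_of_lt_of_le hpmin hx.1)
      have h := ((hasDerivAt_inv hx0).const_mul q).neg
      exact h.congr_deriv (by ring)
    have hcont : IntervalIntegrable (fun u => q / u ^ 2) volume pmin q := by
      refine ContinuousOn.intervalIntegrable ?_
      refine ContinuousOn.div continuousOn_const (by fun_prop) ?_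
      intro x hx
      rw [uIcc_of_le hq.1] at hx
      have hx0 : 0 < x := lt_of_lt_of_le hpmin hx.1
      positivity
    rw [intervalIntegral.integral_eq_sub_of_hasDerivAt hder hcont]
    field_simp
    ring
  have h2 : ∫ u in q..pmax, (if u ≤ q then q / u ^ 2 else 0) = 0 := by
    rw [intervalIntegral.integral_of_le hq.2]
    rw [MeasureTheory.setIntegral_congr_fun measurableSet_Ioc
      (g := fun _ => (0:ℝ)) (fun x hx => by simp [not_le.mpr hx.1])]
    simp
  have hsplit := integral_add_adjacent_intervals int1 int2
  rw [← hsplit, h1, h2, add_zero]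

lemma slot_key (hd : 0 ≤ d) (hpmin : 0 < pmin) (hpp : pmin ≤ pmax)
    (hcon : ConcaveOn ℝ (Icc 0 d) G)
    (hder : ∀ x ∈ Icc 0 d, HasDerivWithinAt G (G' x) (Icc 0 d) x)
    (hgr : ∀ x ∈ Icc 0 d, G' x ∈ Icc pmin pmax) (hG0 : G 0 = 0)
    {w : ℝ} (hw : w ∈ Icc 0 d) :
    ∫ u in pmin..pmax, min (Gf G d u) (G w) / u ^ 2 ≤ G w / pmin - w := by
  have hpmax : (0:ℝ) < pmax := lt_of_lt_of_le hpmin hpp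
  have hub : ∀ x ∈ Icc 0 d, G x ≤ pmax * x := fun x hx =>
    (g_bounds hcon hder hgr hG0 hd hx).2
  have hWd : Icc 0 w ⊆ Icc 0 d := Icc_subset_Icc (le_refl _) hw.2
  have hclamp : ∀ y : ℝ, max 0 (min w y) ∈ Icc 0 d := fun y =>
    ⟨le_max_left _ _, max_le hd (le_trans (min_le_left _ _) hw.2)⟩
  set φ : ℝ → ℝ := fun y => G' (max 0 (min w y)) with hφdef
  have hφmem : ∀ y, φ y ∈ Icc pmin pmax := fun y => hgr _ (hclamp y)
  have hφanti : Antitone φ := by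
    intro y1 y2 h
    exact deriv_anti hcon hder (hclamp y1) (hclamp y2)
      (max_le_max (le_refl _) (min_le_min (le_refl _) h))
  have hφeq : ∀ y ∈ Icc 0 w, φ y = G' y := by
    intro y hy
    have : max 0 (min w y) = y := by
      rw [min_eq_right hy.2, max_eq_right hy.1]
    rw [hφdef]; simp only [this]
  set F : ℝ → ℝ → ℝ := fun u y => if u ≤ φ y then φ y / u ^ 2 else 0 with hFdef
  have hφm : Measurable φ := hφanti.measurable
  have hFm : Measurable (Function.uncurry F) := by
    refine Measurable.ite ?_ ?_ measurable_const
    · exact measurableSet_le measurable_fst (hφm.comp measurable_snd)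
    · exact (hφm.comp measurable_snd).div ((measurable_fst.pow_const 2))
  have hFint : Integrable (Function.uncurry F)
      ((volume.restrict (Ioc pmin pmax)).prod (volume.restrict (Ioc 0 w))) := by
    refine ⟨hFm.aestronglyMeasurable, ?_⟩
    refine HasFiniteIntegral.of_bounded (C := pmax / pmin ^ 2) ?_
    rw [Measure.prod_restrict]
    refine (ae_restrict_iff' (measurableSet_Ioc.prod measurableSet_Ioc)).2 (ae_of_all _ ?_)
    rintro ⟨u, y⟩ ⟨hu, hy⟩
    simp only [Function.uncurry, hFdef]
    by_cases hc : u ≤ φ y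
    · have hu0 : 0 < u := lt_trans hpmin hu.1
      have hφ0 : 0 ≤ φ y := le_trans hpmin.le (hφmem y).1
      rw [if_pos hc, Real.norm_eq_abs, abs_of_nonneg (by positivity)]
      refine div_le_div₀ hpmax.le (hφmem y).2 (by positivity) ?_
      nlinarith [hu.1, hpmin]
    · rw [if_neg hc]
      simp only [norm_zero]
      positivity
  have hmono1 : ∀ u ∈ Icc pmin pmax, min (Gf G d u) (G w) / u ^ 2 ≤ ∫ y in (0:ℝ)..w, F u y := by
    intro u hu
    have hu0 : 0 < u := lt_of_lt_of_le hpmin hu.1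
    have hFy : (fun y => F u y) = fun y => (if u ≤ φ y then φ y else 0) / u ^ 2 := by
      funext y
      by_cases hc : u ≤ φ y <;> simp [hFdef, hc]
    have hrw : ∫ y in (0:ℝ)..w, F u y
        = (∫ y in (0:ℝ)..w, (if u ≤ G' y then G' y else 0)) / u ^ 2 := by
      rw [hFy, intervalIntegral.integral_div]
      congr 1
      refine intervalIntegral.integral_congr fun y hy => ?_
      rw [uIcc_of_le hw.1] at hy
      rw [hφeq y hy]
    rw [hrw]
    have hA := stepA hd hpmin hpp hcon hder hgr hG0 hw hu
    rw [div_eq_mul_inv, div_eq_mul_inv]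
    exact mul_le_mul_of_nonneg_right hA (by positivity)
  have hGfanti : AntitoneOn (fun u => min (Gf G d u) (G w)) (uIcc pmin pmax) := by
    intro u1 h1 u2 h2 h12
    rw [uIcc_of_le hpp] at h1 h2
    have h0 : (0:ℝ) ≤ u1 := le_trans hpmin.le h1.1
    exact min_le_min (Gf_anti hd hub hpmax.le h0 h12) (le_refl _)
  have intL : IntervalIntegrable (fun u => min (Gf G d u) (G w) / u ^ 2) volume pmin pmax := by
    have h1 : IntervalIntegrable (fun u => min (Gf G d u) (G w)) volume pmin pmax :=
      hGfanti.intervalIntegrable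
    have h2 : ContinuousOn (fun u : ℝ => (u ^ 2)⁻¹) (uIcc pmin pmax) := by
      refine ContinuousOn.inv₀ (by fun_prop) ?_
      intro x hx
      rw [uIcc_of_le hpp] at hx
      have : 0 < x := lt_of_lt_of_le hpmin hx.1
      positivity
    simpa only [div_eq_mul_inv] using h1.mul_continuousOn h2
  have heqR : (fun u => ∫ y in (0:ℝ)..w, F u y)
      = fun u => ∫ y, F u y ∂(volume.restrict (Ioc 0 w)) := by
    funext u
    rw [intervalIntegral.integral_of_le hw.1]
  have intR : IntervalIntegrable (fun u => ∫ y in (0:ℝ)..w, F u y) volume pmin pmax := by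
    rw [intervalIntegrable_iff, uIoc_of_le hpp, heqR]
    exact hFint.integral_prod_left
  calc ∫ u in pmin..pmax, min (Gf G d u) (G w) / u ^ 2
      ≤ ∫ u in pmin..pmax, (∫ y in (0:ℝ)..w, F u y) :=
        intervalIntegral.integral_mono_on hpp intL intR hmono1
    _ = ∫ y in (0:ℝ)..w, (∫ u in pmin..pmax, F u y) := by
        rw [intervalIntegral.integral_of_le hpp, intervalIntegral.integral_of_le hw.1]
        simp_rw [intervalIntegral.integral_of_le hw.1, intervalIntegral.integral_of_le hpp]
        exact integral_integral_swap hFint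
    _ = ∫ y in (0:ℝ)..w, (G' y / pmin - 1) := by
        refine intervalIntegral.integral_congr fun y hy => ?_
        rw [uIcc_of_le hw.1] at hy
        have hsc := stepC hpmin hpp (hφmem y)
        have : ∫ u in pmin..pmax, F u y = φ y / pmin - 1 := hsc
        rw [this, hφeq y hy]
    _ = G w / pmin - w := by
        have ia : IntervalIntegrable (fun y => G' y / pmin) volume 0 w := by
          refine AntitoneOn.intervalIntegrable ?_
          intro y1 h1 y2 h2 h12
          rw [uIcc_of_le hw.1] at h1 h2
          have hda := deriv_anti hcon hder (hWd h1) (hWd h2) h12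
          show G' y2 / pmin ≤ G' y1 / pmin
          rw [div_eq_mul_inv, div_eq_mul_inv]
          exact mul_le_mul_of_nonneg_right hda (by positivity)
        have ib : IntervalIntegrable (fun _ : ℝ => (1:ℝ)) volume 0 w :=
          intervalIntegrable_const
        rw [intervalIntegral.integral_sub ia ib, intervalIntegral.integral_div,
          slot_FTC hcon hder ⟨le_refl _, hd⟩ hw hw.1, hG0, sub_zero,
          intervalIntegral.integral_const]
        simp [smul_eq_mul]


/-! ## Multi-slot theory -/

def Rev (g : ℕ → ℝ → ℝ) (t : ℕ) (v : ℕ → ℝ) : ℝ := ∑ τ ∈ Finset.Icc 1 t, g τ (v τ)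
def Mass (t : ℕ) (v : ℕ → ℝ) : ℝ := ∑ τ ∈ Finset.Icc 1 t, v τ
def Feas (δ : ℕ → ℝ) (t : ℕ) (c : ℝ) (v : ℕ → ℝ) : Prop :=
  (∀ τ ∈ Finset.Icc 1 t, v τ ∈ Icc 0 (δ τ)) ∧ Mass t v ≤ c
noncomputable def Lag (g : ℕ → ℝ → ℝ) (δ : ℕ → ℝ) (t : ℕ) (u c : ℝ) : ℝ :=
  sSup ((fun v => Rev g t v - u * Mass t v) '' {v | Feas δ t c v})
noncomputable def fopt (g : ℕ → ℝ → ℝ) (δ : ℕ → ℝ) (t : ℕ) (c : ℝ) : ℝ :=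
  Lag g δ t 0 c

variable {g g' : ℕ → ℝ → ℝ} {δ : ℕ → ℝ} {C pmin pmax : ℝ} {T : ℕ}

lemma memT {t τ : ℕ} (ht : t ≤ T) (hτ : τ ∈ Finset.Icc 1 t) : τ ∈ Finset.Icc 1 T := by
  rw [Finset.mem_Icc] at hτ ⊢
  exact ⟨hτ.1, le_trans hτ.2 ht⟩

lemma Mass_nonneg {t : ℕ} {c : ℝ} {v : ℕ → ℝ} (hv : Feas δ t c v) : 0 ≤ Mass t v :=
  Finset.sum_nonneg fun τ hτ => (hv.1 τ hτ).1

lemma Feas_zero (hδ : ∀ τ ∈ Finset.Icc 1 T, 0 ≤ δ τ) {t : ℕ} (ht : t ≤ T) {c : ℝ}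
    (hc : 0 ≤ c) : Feas δ t c (fun _ => 0) := by
  constructor
  · intro τ hτ
    exact ⟨le_refl _, hδ τ (memT ht hτ)⟩
  · simpa [Mass] using hc

lemma Rev_zero (hg0 : ∀ τ ∈ Finset.Icc 1 T, g τ 0 = 0) {t : ℕ} (ht : t ≤ T) :
    Rev g t (fun _ => 0) = 0 := by
  refine Finset.sum_eq_zero fun τ hτ => hg0 τ (memT ht hτ)

lemma Lag_nonempty (hδ : ∀ τ ∈ Finset.Icc 1 T, 0 ≤ δ τ) {t : ℕ} (ht : t ≤ T)
    {u c : ℝ} (hc : 0 ≤ c) :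
    ((fun v => Rev g t v - u * Mass t v) '' {v | Feas δ t c v}).Nonempty :=
  ⟨_, ⟨fun _ => 0, Feas_zero hδ ht hc, rfl⟩⟩

lemma Lag_bddAbove (hub : ∀ τ ∈ Finset.Icc 1 T, ∀ x ∈ Icc 0 (δ τ), g τ x ≤ pmax * x)
    (hpmax : 0 ≤ pmax) {t : ℕ} (ht : t ≤ T) {u c : ℝ} (hu : 0 ≤ u) :
    BddAbove ((fun v => Rev g t v - u * Mass t v) '' {v | Feas δ t c v}) := by
  refine ⟨∑ τ ∈ Finset.Icc 1 t, pmax * δ τ, ?_⟩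
  rintro y ⟨v, hv, rfl⟩
  have h1 : Rev g t v ≤ ∑ τ ∈ Finset.Icc 1 t, pmax * δ τ := by
    refine Finset.sum_le_sum fun τ hτ => ?_
    calc g τ (v τ) ≤ pmax * v τ := hub τ (memT ht hτ) _ (hv.1 τ hτ)
    _ ≤ pmax * δ τ := mul_le_mul_of_nonneg_left (hv.1 τ hτ).2 hpmax
  have h2 : 0 ≤ u * Mass t v := mul_nonneg hu (Mass_nonneg hv)
  show Rev g t v - u * Mass t v ≤ _
  linarith

lemma Lag_ge (hub : ∀ τ ∈ Finset.Icc 1 T, ∀ x ∈ Icc 0 (δ τ), g τ x ≤ pmax * x)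
    (hpmax : 0 ≤ pmax) {t : ℕ} (ht : t ≤ T) {u c : ℝ} (hu : 0 ≤ u) {v : ℕ → ℝ}
    (hv : Feas δ t c v) : Rev g t v - u * Mass t v ≤ Lag g δ t u c :=
  le_csSup (Lag_bddAbove hub hpmax ht hu) ⟨v, hv, rfl⟩

lemma fopt_ge (hub : ∀ τ ∈ Finset.Icc 1 T, ∀ x ∈ Icc 0 (δ τ), g τ x ≤ pmax * x)
    (hpmax : 0 ≤ pmax) {t : ℕ} (ht : t ≤ T) {c : ℝ} {v : ℕ → ℝ}
    (hv : Feas δ t c v) : Rev g t v ≤ fopt g δ t c := by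
  have := Lag_ge hub hpmax ht (le_refl (0:ℝ)) hv
  simpa [fopt] using this

lemma Lag_le (hδ : ∀ τ ∈ Finset.Icc 1 T, 0 ≤ δ τ) {t : ℕ} (ht : t ≤ T)
    {u c a : ℝ} (hc : 0 ≤ c)
    (h : ∀ v, Feas δ t c v → Rev g t v - u * Mass t v ≤ a) : Lag g δ t u c ≤ a := by
  refine csSup_le (Lag_nonempty hδ ht hc) ?_
  rintro y ⟨v, hv, rfl⟩
  exact h v hv

lemma fopt_le (hδ : ∀ τ ∈ Finset.Icc 1 T, 0 ≤ δ τ) {t : ℕ} (ht : t ≤ T)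
    {c a : ℝ} (hc : 0 ≤ c)
    (h : ∀ v, Feas δ t c v → Rev g t v ≤ a) : fopt g δ t c ≤ a := by
  refine Lag_le hδ ht hc fun v hv => ?_
  simpa using h v hv

lemma Lag_exists (hδ : ∀ τ ∈ Finset.Icc 1 T, 0 ≤ δ τ)
    (hub : ∀ τ ∈ Finset.Icc 1 T, ∀ x ∈ Icc 0 (δ τ), g τ x ≤ pmax * x)
    (hpmax : 0 ≤ pmax) {t : ℕ} (ht : t ≤ T) {u c : ℝ} (hu : 0 ≤ u) (hc : 0 ≤ c)
    {ε : ℝ} (hε : 0 < ε) :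
    ∃ v, Feas δ t c v ∧ Lag g δ t u c - ε < Rev g t v - u * Mass t v := by
  have hlt : Lag g δ t u c - ε < Lag g δ t u c := by linarith
  obtain ⟨y, ⟨v, hv, rfl⟩, hy⟩ := exists_lt_of_lt_csSup (Lag_nonempty hδ ht hc) hlt
  exact ⟨v, hv, hy⟩


lemma Rev_succ {b : ℕ} (v : ℕ → ℝ) :
    Rev g (b + 1) v = Rev g b v + g (b + 1) (v (b + 1)) :=
  Finset.sum_Icc_succ_top (Nat.le_add_left 1 b) _

lemma Mass_succ {b : ℕ} (v : ℕ → ℝ) :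
    Mass (b + 1) v = Mass b v + v (b + 1) :=
  Finset.sum_Icc_succ_top (Nat.le_add_left 1 b) _

lemma Rev_update {b : ℕ} (v : ℕ → ℝ) (x : ℝ) :
    Rev g b (Function.update v (b + 1) x) = Rev g b v := by
  refine Finset.sum_congr rfl fun τ hτ => ?_
  have : τ ≠ b + 1 := by
    rw [Finset.mem_Icc] at hτ; omega
  rw [Function.update_of_ne this]

lemma Mass_update {b : ℕ} (v : ℕ → ℝ) (x : ℝ) :
    Mass b (Function.update v (b + 1) x) = Mass b v := by
  refine Finset.sum_congr rfl fun τ hτ => ?_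
  have : τ ≠ b + 1 := by
    rw [Finset.mem_Icc] at hτ; omega
  rw [Function.update_of_ne this]

lemma Feas_update (hδ : ∀ τ ∈ Finset.Icc 1 T, 0 ≤ δ τ) {b : ℕ} (hb : b + 1 ≤ T)
    {c x : ℝ} {v : ℕ → ℝ} (hv : Feas δ b (c - x) v) (hx : x ∈ Icc 0 (δ (b + 1))) :
    Feas δ (b + 1) c (Function.update v (b + 1) x) := by
  constructor
  · intro τ hτ
    rcases eq_or_ne τ (b + 1) with rfl | hne
    · rw [Function.update_self]; exact hx
    · rw [Function.update_of_ne hne]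
      refine hv.1 τ ?_
      rw [Finset.mem_Icc] at hτ ⊢
      omega
  · rw [Mass_succ, Mass_update, Function.update_self]
    have := hv.2
    linarith

lemma Feas_restrict {b : ℕ} {c : ℝ} {v : ℕ → ℝ} (hv : Feas δ (b + 1) c v) :
    Feas δ b (c - v (b + 1)) v := by
  constructor
  · intro τ hτ
    refine hv.1 τ ?_
    rw [Finset.mem_Icc] at hτ ⊢
    omega
  · have := hv.2
    rw [Mass_succ] at this
    linarith

lemma Lag_mono_t (hδ : ∀ τ ∈ Finset.Icc 1 T, 0 ≤ δ τ)
    (hg0 : ∀ τ ∈ Finset.Icc 1 T, g τ 0 = 0)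
    (hub : ∀ τ ∈ Finset.Icc 1 T, ∀ x ∈ Icc 0 (δ τ), g τ x ≤ pmax * x)
    (hpmax : 0 ≤ pmax) {b : ℕ} (hb : b + 1 ≤ T) {u c : ℝ} (hu : 0 ≤ u) (hc : 0 ≤ c) :
    Lag g δ b u c ≤ Lag g δ (b + 1) u c := by
  refine Lag_le hδ (le_trans (Nat.le_succ b) hb) hc fun v hv => ?_
  have h0 : (0:ℝ) ∈ Icc 0 (δ (b+1)) := ⟨le_refl _, hδ _ (by rw [Finset.mem_Icc]; omega)⟩
  have hv' : Feas δ (b + 1) c (Function.update v (b + 1) 0) := by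
    refine Feas_update hδ hb ?_ h0
    constructor
    · exact hv.1
    · have := hv.2; linarith
  have := Lag_ge hub hpmax hb hu hv'
  rw [Rev_succ, Mass_succ, Rev_update, Mass_update, Function.update_self] at this
  rw [hg0 (b+1) (by rw [Finset.mem_Icc]; omega)] at this
  linarith

lemma fopt_mono_c (hδ : ∀ τ ∈ Finset.Icc 1 T, 0 ≤ δ τ)
    (hub : ∀ τ ∈ Finset.Icc 1 T, ∀ x ∈ Icc 0 (δ τ), g τ x ≤ pmax * x)
    (hpmax : 0 ≤ pmax) {t : ℕ} (ht : t ≤ T) {c c' : ℝ} (hc : 0 ≤ c) (hcc : c ≤ c') :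
    fopt g δ t c ≤ fopt g δ t c' := by
  refine fopt_le hδ ht hc fun v hv => ?_
  exact fopt_ge hub hpmax ht ⟨hv.1, le_trans hv.2 hcc⟩

lemma fopt_concave_mix (hδ : ∀ τ ∈ Finset.Icc 1 T, 0 ≤ δ τ)
    (hub : ∀ τ ∈ Finset.Icc 1 T, ∀ x ∈ Icc 0 (δ τ), g τ x ≤ pmax * x)
    (hconc : ∀ τ ∈ Finset.Icc 1 T, ConcaveOn ℝ (Icc 0 (δ τ)) (g τ))
    (hpmax : 0 ≤ pmax) {t : ℕ} (ht : t ≤ T) {c1 c2 a b : ℝ}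
    (hc1 : 0 ≤ c1) (hc2 : 0 ≤ c2) (ha : 0 ≤ a) (hb : 0 ≤ b) (hab : a + b = 1) :
    a * fopt g δ t c1 + b * fopt g δ t c2 ≤ fopt g δ t (a * c1 + b * c2) := by
  refine le_of_forall_pos_le_add fun ε hε => ?_
  obtain ⟨v1, hv1, hy1⟩ := Lag_exists hδ hub hpmax ht (le_refl (0:ℝ)) hc1 hε
  obtain ⟨v2, hv2, hy2⟩ := Lag_exists hδ hub hpmax ht (le_refl (0:ℝ)) hc2 hε
  simp only [zero_mul, sub_zero] at hy1 hy2
  set v : ℕ → ℝ := fun τ => a * v1 τ + b * v2 τ with hvdef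
  have hfeas : Feas δ t (a * c1 + b * c2) v := by
    constructor
    · intro τ hτ
      have h1 := hv1.1 τ hτ
      have h2 := hv2.1 τ hτ
      constructor
      · have := mul_nonneg ha h1.1; have := mul_nonneg hb h2.1
        simp only [hvdef]; linarith
      · have e1 : a * v1 τ ≤ a * δ τ := mul_le_mul_of_nonneg_left h1.2 ha
        have e2 : b * v2 τ ≤ b * δ τ := mul_le_mul_of_nonneg_left h2.2 hb
        have e3 : a * δ τ + b * δ τ = δ τ := by rw [← add_mul, hab, one_mul]
        simp only [hvdef]; linarith
    · have : Mass t v = a * Mass t v1 + b * Mass t v2 := by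
        simp only [Mass, hvdef, Finset.mul_sum, ← Finset.sum_add_distrib]
      rw [this]
      have e1 : a * Mass t v1 ≤ a * c1 := mul_le_mul_of_nonneg_left hv1.2 ha
      have e2 : b * Mass t v2 ≤ b * c2 := mul_le_mul_of_nonneg_left hv2.2 hb
      linarith
  have hrev : a * Rev g t v1 + b * Rev g t v2 ≤ Rev g t v := by
    simp only [Rev, Finset.mul_sum, ← Finset.sum_add_distrib]
    refine Finset.sum_le_sum fun τ hτ => ?_
    have h1 := hv1.1 τ hτ
    have h2 := hv2.1 τ hτ
    have := (hconc τ (memT ht hτ)).2 h1 h2 ha hb hab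
    simpa [smul_eq_mul] using this
  have hle : Rev g t v ≤ fopt g δ t (a * c1 + b * c2) := fopt_ge hub hpmax ht hfeas
  have e1 : a * (fopt g δ t c1 - ε) ≤ a * Rev g t v1 :=
    mul_le_mul_of_nonneg_left (le_of_lt hy1) ha
  have e2 : b * (fopt g δ t c2 - ε) ≤ b * Rev g t v2 :=
    mul_le_mul_of_nonneg_left (le_of_lt hy2) hb
  nlinarith [hε.le]

lemma fopt_four (hδ : ∀ τ ∈ Finset.Icc 1 T, 0 ≤ δ τ)
    (hub : ∀ τ ∈ Finset.Icc 1 T, ∀ x ∈ Icc 0 (δ τ), g τ x ≤ pmax * x)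
    (hconc : ∀ τ ∈ Finset.Icc 1 T, ConcaveOn ℝ (Icc 0 (δ τ)) (g τ))
    (hpmax : 0 ≤ pmax) {t : ℕ} (ht : t ≤ T) {a b b' dd : ℝ}
    (h0 : 0 ≤ a) (h1 : a ≤ b) (h2 : b ≤ dd) (h3 : a ≤ b') (h4 : b' ≤ dd)
    (hsum : a + dd = b + b') :
    fopt g δ t a + fopt g δ t dd ≤ fopt g δ t b + fopt g δ t b' := by
  rcases eq_or_lt_of_le (le_trans h1 h2) with heq | hlt
  · have hb : b = a := le_antisymm (heq ▸ h2) h1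
    have hb' : b' = a := le_antisymm (heq ▸ h4) h3
    rw [hb, hb', ← heq]
  · have hda : 0 < dd - a := by linarith
    set s := (dd - b) / (dd - a) with hsdef
    have hs0 : 0 ≤ s := div_nonneg (by linarith) hda.le
    have hs1 : s ≤ 1 := by
      rw [hsdef, div_le_one hda]; linarith
    have hkey : s * (dd - a) = dd - b := by
      rw [hsdef]; field_simp
    have hmix1 : s * a + (1 - s) * dd = b := by linear_combination -hkey
    have hmix2 : (1 - s) * a + s * dd = b' := by linear_combination hkey + hsum
    have hdd0 : 0 ≤ dd := le_trans h0 (by linarith)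
    have hA := fopt_concave_mix hδ hub hconc hpmax ht h0 hdd0 hs0
      (by linarith : (0:ℝ) ≤ 1 - s) (by ring)
    have hB := fopt_concave_mix hδ hub hconc hpmax ht h0 hdd0
      (by linarith : (0:ℝ) ≤ 1 - s) hs0 (by ring)
    rw [hmix1] at hA
    rw [hmix2] at hB
    linarith


lemma S1 (hδ : ∀ τ ∈ Finset.Icc 1 T, 0 ≤ δ τ)
    (hub : ∀ τ ∈ Finset.Icc 1 T, ∀ x ∈ Icc 0 (δ τ), g τ x ≤ pmax * x)
    (hpmax : 0 ≤ pmax) {b : ℕ} (hb : b + 1 ≤ T) {c x : ℝ}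
    (hx : x ∈ Icc 0 (δ (b + 1))) (hxc : x ≤ c) :
    fopt g δ b (c - x) + g (b + 1) x ≤ fopt g δ (b + 1) c := by
  have hbT : b ≤ T := le_trans (Nat.le_succ b) hb
  have hcx : 0 ≤ c - x := by linarith [hx.1]
  have h : ∀ v, Feas δ b (c - x) v → Rev g b v ≤ fopt g δ (b + 1) c - g (b + 1) x := by
    intro v hv
    have hv' : Feas δ (b + 1) c (Function.update v (b + 1) x) := Feas_update hδ hb hv hx
    have := fopt_ge hub hpmax hb hv'
    rw [Rev_succ, Rev_update, Function.update_self] at this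
    linarith
  have := fopt_le hδ hbT hcx h
  linarith

lemma S2 (hδ : ∀ τ ∈ Finset.Icc 1 T, 0 ≤ δ τ)
    (hub : ∀ τ ∈ Finset.Icc 1 T, ∀ x ∈ Icc 0 (δ τ), g τ x ≤ pmax * x)
    (hpmax : 0 ≤ pmax) {b : ℕ} (hb : b + 1 ≤ T) {c : ℝ} (hc : 0 ≤ c)
    {ε : ℝ} (hε : 0 < ε) :
    ∃ x, x ∈ Icc 0 (δ (b + 1)) ∧ x ≤ c ∧
      fopt g δ (b + 1) c ≤ fopt g δ b (c - x) + g (b + 1) x + ε := by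
  have hbT : b ≤ T := le_trans (Nat.le_succ b) hb
  obtain ⟨v, hv, hy⟩ := Lag_exists hδ hub hpmax hb (le_refl (0:ℝ)) hc hε
  simp only [zero_mul, sub_zero] at hy
  refine ⟨v (b + 1), hv.1 (b + 1) (by rw [Finset.mem_Icc]; omega), ?_, ?_⟩
  · have h1 : 0 ≤ Mass b v := Finset.sum_nonneg fun τ hτ => (hv.1 τ (by
      rw [Finset.mem_Icc] at hτ ⊢; omega)).1
    have h2 := hv.2
    rw [Mass_succ] at h2
    linarith
  · have hres : Feas δ b (c - v (b + 1)) v := Feas_restrict hv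
    have h3 : Rev g b v ≤ fopt g δ b (c - v (b + 1)) := fopt_ge hub hpmax hbT hres
    have h4 : Rev g (b + 1) v = Rev g b v + g (b + 1) (v (b + 1)) := Rev_succ v
    have h5 : fopt g δ (b + 1) c - ε < Rev g (b + 1) v := hy
    linarith

lemma k_mono (hδ : ∀ τ ∈ Finset.Icc 1 T, 0 ≤ δ τ)
    (hub : ∀ τ ∈ Finset.Icc 1 T, ∀ x ∈ Icc 0 (δ τ), g τ x ≤ pmax * x)
    (hconc : ∀ τ ∈ Finset.Icc 1 T, ConcaveOn ℝ (Icc 0 (δ τ)) (g τ))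
    (hpmax : 0 ≤ pmax) {b : ℕ} (hb : b + 1 ≤ T) {c c' : ℝ}
    (hc : 0 ≤ c) (hcc : c ≤ c') :
    fopt g δ (b + 1) c - fopt g δ b c ≤ fopt g δ (b + 1) c' - fopt g δ b c' := by
  have hbT : b ≤ T := le_trans (Nat.le_succ b) hb
  have key : ∀ ε : ℝ, 0 < ε →
      fopt g δ (b + 1) c + fopt g δ b c' ≤ fopt g δ (b + 1) c' + fopt g δ b c + ε := by
    intro ε hε
    obtain ⟨x, hx, hxc, hS2⟩ := S2 hδ hub hpmax hb hc hε
    have hS1 : fopt g δ b (c' - x) + g (b + 1) x ≤ fopt g δ (b + 1) c' :=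
      S1 hδ hub hpmax hb hx (le_trans hxc hcc)
    have h4 : fopt g δ b (c - x) + fopt g δ b c' ≤ fopt g δ b c + fopt g δ b (c' - x) := by
      refine fopt_four hδ hub hconc hpmax hbT ?_ ?_ ?_ ?_ ?_ ?_
      · linarith [hx.1]
      · linarith [hx.1]
      · linarith
      · linarith
      · linarith [hx.1]
      · ring
    linarith
  have := fun ε hε => key ε hε
  nlinarith [le_of_forall_pos_le_add (fun ε hε => by linarith [key ε hε] :
    ∀ ε : ℝ, 0 < ε → fopt g δ (b + 1) c + fopt g δ b c' ≤
      fopt g δ (b + 1) c' + fopt g δ b c + ε)]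

lemma fopt_le_Lag (hδ : ∀ τ ∈ Finset.Icc 1 T, 0 ≤ δ τ)
    (hub : ∀ τ ∈ Finset.Icc 1 T, ∀ x ∈ Icc 0 (δ τ), g τ x ≤ pmax * x)
    (hpmax : 0 ≤ pmax) (hC : 0 ≤ C) {t : ℕ} (ht : t ≤ T) {u c : ℝ} (hu : 0 ≤ u)
    (hc0 : 0 ≤ c) (hc : c ≤ C) :
    fopt g δ t c - u * c ≤ Lag g δ t u C := by
  have h : ∀ v, Feas δ t c v → Rev g t v ≤ Lag g δ t u C + u * c := by
    intro v hv
    have hv' : Feas δ t C v := ⟨hv.1, le_trans hv.2 hc⟩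
    have h1 := Lag_ge hub hpmax ht hu hv'
    have h2 : u * Mass t v ≤ u * c := mul_le_mul_of_nonneg_left hv.2 hu
    linarith
  have := fopt_le hδ ht hc0 h
  linarith

lemma supermod (hδ : ∀ τ ∈ Finset.Icc 1 T, 0 ≤ δ τ)
    (hub : ∀ τ ∈ Finset.Icc 1 T, ∀ x ∈ Icc 0 (δ τ), g τ x ≤ pmax * x)
    (hconc : ∀ τ ∈ Finset.Icc 1 T, ConcaveOn ℝ (Icc 0 (δ τ)) (g τ))
    (hpmax : 0 ≤ pmax) (hC : 0 ≤ C) {b : ℕ} (hb : b + 1 ≤ T) {u : ℝ} (hu : 0 ≤ u) :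
    Lag g δ (b + 1) u C - Lag g δ b u C ≤ fopt g δ (b + 1) C - fopt g δ b C := by
  have hbT : b ≤ T := le_trans (Nat.le_succ b) hb
  have key : ∀ ε : ℝ, 0 < ε → Lag g δ (b + 1) u C ≤
      Lag g δ b u C + (fopt g δ (b + 1) C - fopt g δ b C) + ε := by
    intro ε hε
    obtain ⟨v, hv, hy⟩ := Lag_exists hδ hub hpmax hb hu hC hε
    set c := Mass (b + 1) v with hcdef
    have hc0 : 0 ≤ c := Mass_nonneg hv
    have hcC : c ≤ C := hv.2
    have h1 : Rev g (b + 1) v ≤ fopt g δ (b + 1) c :=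
      fopt_ge hub hpmax hb ⟨hv.1, le_refl _⟩
    have h2 : fopt g δ b c - u * c ≤ Lag g δ b u C :=
      fopt_le_Lag hδ hub hpmax hC hbT hu hc0 hcC
    have h3 : fopt g δ (b + 1) c - fopt g δ b c ≤ fopt g δ (b + 1) C - fopt g δ b C :=
      k_mono hδ hub hconc hpmax hb hc0 hcC
    have h4 : Lag g δ (b + 1) u C - ε < Rev g (b + 1) v - u * c := hy
    linarith
  have h := le_of_forall_pos_le_add (fun ε hε => by linarith [key ε hε] :
    ∀ ε : ℝ, 0 < ε → Lag g δ (b + 1) u C ≤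
      (Lag g δ b u C + (fopt g δ (b + 1) C - fopt g δ b C)) + ε)
  linarith

lemma DeltaL_le_G (hδ : ∀ τ ∈ Finset.Icc 1 T, 0 ≤ δ τ)
    (hub : ∀ τ ∈ Finset.Icc 1 T, ∀ x ∈ Icc 0 (δ τ), g τ x ≤ pmax * x)
    (hpmax : 0 ≤ pmax) (hC : 0 ≤ C) {b : ℕ} (hb : b + 1 ≤ T) {u : ℝ} (hu : 0 ≤ u) :
    Lag g δ (b + 1) u C - Lag g δ b u C ≤ Gf (g (b + 1)) (δ (b + 1)) u := by
  have hbT : b ≤ T := le_trans (Nat.le_succ b) hb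
  have hmem : b + 1 ∈ Finset.Icc 1 T := by rw [Finset.mem_Icc]; omega
  have key : ∀ ε : ℝ, 0 < ε → Lag g δ (b + 1) u C ≤
      Lag g δ b u C + Gf (g (b + 1)) (δ (b + 1)) u + ε := by
    intro ε hε
    obtain ⟨v, hv, hy⟩ := Lag_exists hδ hub hpmax hb hu hC hε
    set x := v (b + 1) with hxdef
    have hx : x ∈ Icc 0 (δ (b + 1)) := hv.1 (b + 1) (by rw [Finset.mem_Icc]; omega)
    have hres : Feas δ b (C - x) v := Feas_restrict hv
    have h1 : Rev g b v - u * Mass b v ≤ Lag g δ b u C := by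
      refine Lag_ge hub hpmax hbT hu ⟨hres.1, ?_⟩
      have := hres.2
      linarith [hx.1]
    have h2 : g (b + 1) x - u * x ≤ Gf (g (b + 1)) (δ (b + 1)) u :=
      Gf_ge (fun y hy => hub (b + 1) hmem y hy) hpmax hu hx
    have h4 := hy
    rw [Rev_succ, Mass_succ] at h4
    have : Lag g δ (b + 1) u C - ε <
        (Rev g b v - u * Mass b v) + (g (b + 1) x - u * x) := by
      rw [← hxdef] at h4
      linarith [h4]
    linarith
  have h := le_of_forall_pos_le_add (fun ε hε => by linarith [key ε hε] :
    ∀ ε : ℝ, 0 < ε → Lag g δ (b + 1) u C ≤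
      (Lag g δ b u C + Gf (g (b + 1)) (δ (b + 1)) u) + ε)
  linarith


noncomputable def Psi (g : ℕ → ℝ → ℝ) (δ : ℕ → ℝ) (C pmin pmax : ℝ) (t : ℕ) : ℝ :=
  fopt g δ t C / pmin - ∫ u in pmin..pmax, Lag g δ t u C / u ^ 2

lemma Lag_zero_t {u c : ℝ} (hc : 0 ≤ c) : Lag g δ 0 u c = 0 := by
  have hempty : Finset.Icc 1 0 = (∅ : Finset ℕ) := by
    apply Finset.Icc_eq_empty; omega
  have hset : ((fun v => Rev g 0 v - u * Mass 0 v) '' {v | Feas δ 0 c v}) = {0} := by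
    apply Subset.antisymm
    · rintro y ⟨v, hv, rfl⟩
      simp [Rev, Mass, hempty]
    · rintro y hy
      rw [mem_singleton_iff] at hy
      subst hy
      refine ⟨fun _ => 0, ⟨fun τ hτ => ?_, ?_⟩, ?_⟩
      · rw [hempty] at hτ; exact absurd hτ (Finset.notMem_empty τ)
      · simp [Mass, hempty, hc]
      · simp [Rev, Mass, hempty]
  rw [Lag, hset, csSup_singleton]

lemma Lag_anti_u (hδ : ∀ τ ∈ Finset.Icc 1 T, 0 ≤ δ τ)
    (hub : ∀ τ ∈ Finset.Icc 1 T, ∀ x ∈ Icc 0 (δ τ), g τ x ≤ pmax * x)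
    (hpmax : 0 ≤ pmax) {t : ℕ} (ht : t ≤ T) {c : ℝ} (hc : 0 ≤ c)
    {u1 u2 : ℝ} (h1 : 0 ≤ u1) (h12 : u1 ≤ u2) :
    Lag g δ t u2 c ≤ Lag g δ t u1 c := by
  refine Lag_le hδ ht hc fun v hv => ?_
  have hM := Mass_nonneg hv
  have := Lag_ge hub hpmax ht h1 hv
  nlinarith

lemma intLag (hδ : ∀ τ ∈ Finset.Icc 1 T, 0 ≤ δ τ)
    (hub : ∀ τ ∈ Finset.Icc 1 T, ∀ x ∈ Icc 0 (δ τ), g τ x ≤ pmax * x)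
    (hpmax : 0 ≤ pmax) {t : ℕ} (ht : t ≤ T) {c : ℝ} (hc : 0 ≤ c)
    {a b : ℝ} (ha : 0 < a) (hab : a ≤ b) :
    IntervalIntegrable (fun u => Lag g δ t u c / u ^ 2) volume a b := by
  have h1 : IntervalIntegrable (fun u => Lag g δ t u c) volume a b := by
    refine AntitoneOn.intervalIntegrable ?_
    intro u1 hu1 u2 hu2 h12
    rw [uIcc_of_le hab] at hu1 hu2
    exact Lag_anti_u hδ hub hpmax ht hc (le_trans ha.le hu1.1) h12
  have h2 : ContinuousOn (fun u : ℝ => (u ^ 2)⁻¹) (uIcc a b) := by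
    refine ContinuousOn.inv₀ (by fun_prop) ?_
    intro x hx
    rw [uIcc_of_le hab] at hx
    have : 0 < x := lt_of_lt_of_le ha hx.1
    positivity
  simpa only [div_eq_mul_inv] using h1.mul_continuousOn h2

lemma Lag_nonneg (hδ : ∀ τ ∈ Finset.Icc 1 T, 0 ≤ δ τ)
    (hg0 : ∀ τ ∈ Finset.Icc 1 T, g τ 0 = 0)
    (hub : ∀ τ ∈ Finset.Icc 1 T, ∀ x ∈ Icc 0 (δ τ), g τ x ≤ pmax * x)
    (hpmax : 0 ≤ pmax) {t : ℕ} (ht : t ≤ T) {u c : ℝ} (hu : 0 ≤ u) (hc : 0 ≤ c) :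
    0 ≤ Lag g δ t u c := by
  have := Lag_ge hub hpmax ht hu (Feas_zero hδ ht hc)
  rw [Rev_zero hg0 ht] at this
  simpa [Mass] using this

/-- The final bound on the potential. -/
lemma Psi_final (hδ : ∀ τ ∈ Finset.Icc 1 T, 0 ≤ δ τ)
    (hg0 : ∀ τ ∈ Finset.Icc 1 T, g τ 0 = 0)
    (hub : ∀ τ ∈ Finset.Icc 1 T, ∀ x ∈ Icc 0 (δ τ), g τ x ≤ pmax * x)
    (hpmin : 0 < pmin) (hpp : pmin ≤ pmax) (hC : 0 < C) {t : ℕ} (ht : t ≤ T) :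
    Psi g δ C pmin pmax t ≤ (Real.log (pmax / pmin) + 1) * C := by
  have hpmax0 : 0 < pmax := lt_of_lt_of_le hpmin hpp
  set R := fopt g δ t C with hRdef
  have hR0 : 0 ≤ R := by
    have := fopt_ge hub hpmax0.le ht (Feas_zero hδ ht hC.le)
    rw [Rev_zero hg0 ht] at this
    exact this
  have hRC : R ≤ pmax * C := by
    refine fopt_le hδ ht hC.le fun v hv => ?_
    have h1 : Rev g t v ≤ pmax * Mass t v := by
      rw [Rev, Mass, Finset.mul_sum]
      refine Finset.sum_le_sum fun τ hτ => hub τ (memT ht hτ) _ (hv.1 τ hτ)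
    have h2 : pmax * Mass t v ≤ pmax * C := mul_le_mul_of_nonneg_left hv.2 hpmax0.le
    linarith
  have hlog0 : 0 ≤ Real.log (pmax / pmin) := by
    refine Real.log_nonneg ?_
    rw [le_div_iff₀ hpmin]
    linarith
  have hInonneg : 0 ≤ ∫ u in pmin..pmax, Lag g δ t u C / u ^ 2 := by
    refine intervalIntegral.integral_nonneg hpp fun u hu => ?_
    have h1 : 0 ≤ Lag g δ t u C :=
      Lag_nonneg hδ hg0 hub hpmax0.le ht (le_trans hpmin.le hu.1) hC.le
    positivity
  by_cases hcase : R / C ≤ pmin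
  · have h1 : Psi g δ C pmin pmax t ≤ R / pmin := by
      rw [Psi, ← hRdef]
      linarith
    have h2 : R / pmin ≤ C := by
      rw [div_le_iff₀ hpmin]
      rw [div_le_iff₀ hC] at hcase
      linarith
    nlinarith
  · push_neg at hcase
    set u2 := R / C with hu2def
    have hu2a : pmin ≤ u2 := hcase.le
    have hu2b : u2 ≤ pmax := by
      rw [hu2def, div_le_iff₀ hC]; linarith
    have hu20 : 0 < u2 := lt_of_lt_of_le hpmin hu2a
    -- closed form for ∫_{pmin}^{u2} (R - u*C)/u^2
    have hclosed : ∫ u in pmin..u2, (R - u * C) / u ^ 2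
        = (R / pmin - R / u2) - C * (Real.log u2 - Real.log pmin) := by
      have hder : ∀ u ∈ uIcc pmin u2,
          HasDerivAt (fun v => -(R * v⁻¹) - C * Real.log v) ((R - u * C) / u ^ 2) u := by
        intro u hu
        rw [uIcc_of_le hu2a] at hu
        have hu0 : 0 < u := lt_of_lt_of_le hpmin hu.1
        have h1 := ((hasDerivAt_inv (ne_of_gt hu0)).const_mul R).neg
        have h2 := (Real.hasDerivAt_log (ne_of_gt hu0)).const_mul C
        have := h1.sub h2
        exact this.congr_deriv (by field_simp)
      have hcont : IntervalIntegrable (fun u => (R - u * C) / u ^ 2) volume pmin u2 := by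
        refine ContinuousOn.intervalIntegrable ?_
        refine ContinuousOn.div (by fun_prop) (by fun_prop) ?_
        intro x hx
        rw [uIcc_of_le hu2a] at hx
        have : 0 < x := lt_of_lt_of_le hpmin hx.1
        positivity
      rw [intervalIntegral.integral_eq_sub_of_hasDerivAt hder hcont]
      ring
    -- lower bound the integral of Lag/u^2
    have hsplit : ∫ u in pmin..pmax, Lag g δ t u C / u ^ 2
        = (∫ u in pmin..u2, Lag g δ t u C / u ^ 2)
          + ∫ u in u2..pmax, Lag g δ t u C / u ^ 2 := by
      exact (intervalIntegral.integral_add_adjacent_intervals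
        (intLag hδ hub hpmax0.le ht hC.le hpmin hu2a)
        (intLag hδ hub hpmax0.le ht hC.le hu20 hu2b)).symm
    have hmono : ∫ u in pmin..u2, (R - u * C) / u ^ 2
        ≤ ∫ u in pmin..u2, Lag g δ t u C / u ^ 2 := by
      refine intervalIntegral.integral_mono_on hu2a ?_
        (intLag hδ hub hpmax0.le ht hC.le hpmin hu2a) ?_
      · refine ContinuousOn.intervalIntegrable ?_
        refine ContinuousOn.div (by fun_prop) (by fun_prop) ?_
        intro x hx
        rw [uIcc_of_le hu2a] at hx
        have : 0 < x := lt_of_lt_of_le hpmin hx.1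
        positivity
      · intro u hu
        have hu0 : 0 < u := lt_of_lt_of_le hpmin hu.1
        have h1 : R - u * C ≤ Lag g δ t u C := by
          have := fopt_le_Lag hδ hub hpmax0.le hC.le ht
            (le_trans hpmin.le hu.1) hC.le (le_refl C)
          rw [← hRdef] at this
          nlinarith
        rw [div_eq_mul_inv, div_eq_mul_inv]
        exact mul_le_mul_of_nonneg_right h1 (by positivity)
    have hrest : 0 ≤ ∫ u in u2..pmax, Lag g δ t u C / u ^ 2 := by
      refine intervalIntegral.integral_nonneg hu2b fun u hu => ?_
      have h1 : 0 ≤ Lag g δ t u C :=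
        Lag_nonneg hδ hg0 hub hpmax0.le ht (le_trans hu20.le hu.1) hC.le
      positivity
    have hRpos : 0 < R := by
      have h := mul_pos hu20 hC
      have e : u2 * C = R := by rw [hu2def]; field_simp
      linarith [e ▸ h]
    have hRu2 : R / u2 = C := by
      rw [hu2def]
      rw [div_div_eq_mul_div]
      rw [mul_comm, mul_div_assoc, div_self (ne_of_gt hRpos), mul_one]
    have hlogle : Real.log u2 - Real.log pmin ≤ Real.log (pmax / pmin) := by
      rw [Real.log_div (ne_of_gt hpmax0) (ne_of_gt hpmin)]
      have := Real.log_le_log hu20 hu2b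
      linarith
    rw [Psi, ← hRdef]
    have hIlow : (R / pmin - R / u2) - C * (Real.log u2 - Real.log pmin)
        ≤ ∫ u in pmin..pmax, Lag g δ t u C / u ^ 2 := by
      rw [hsplit, ← hclosed]
      linarith
    have hfin : C * (Real.log u2 - Real.log pmin) ≤ C * Real.log (pmax / pmin) :=
      mul_le_mul_of_nonneg_left hlogle hC.le
    nlinarith [hRu2]


lemma Psi_step (hδ : ∀ τ ∈ Finset.Icc 1 T, 0 ≤ δ τ)
    (hg0 : ∀ τ ∈ Finset.Icc 1 T, g τ 0 = 0)
    (hub : ∀ τ ∈ Finset.Icc 1 T, ∀ x ∈ Icc 0 (δ τ), g τ x ≤ pmax * x)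
    (hconc : ∀ τ ∈ Finset.Icc 1 T, ConcaveOn ℝ (Icc 0 (δ τ)) (g τ))
    (hpmin : 0 < pmin) (hpp : pmin ≤ pmax) (hC : 0 < C) {b : ℕ} (hb : b + 1 ≤ T)
    (hder_t : ∀ x ∈ Icc 0 (δ (b+1)), HasDerivWithinAt (g (b+1)) (g' (b+1) x) (Icc 0 (δ (b+1))) x)
    (hgr_t : ∀ x ∈ Icc 0 (δ (b+1)), g' (b+1) x ∈ Icc pmin pmax)
    {w : ℝ} (hw : w ∈ Icc 0 (δ (b + 1)))
    (hgw : g (b + 1) w = fopt g δ (b + 1) C - fopt g δ b C) :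
    w ≤ Psi g δ C pmin pmax (b + 1) - Psi g δ C pmin pmax b := by
  have hpmax0 : 0 < pmax := lt_of_lt_of_le hpmin hpp
  have hbT : b ≤ T := le_trans (Nat.le_succ b) hb
  have hmem : b + 1 ∈ Finset.Icc 1 T := by rw [Finset.mem_Icc]; omega
  have hconc_t : ConcaveOn ℝ (Icc 0 (δ (b+1))) (g (b+1)) := hconc _ hmem
  have hg0_t : g (b+1) 0 = 0 := hg0 _ hmem
  have hd_t : 0 ≤ δ (b+1) := hδ _ hmem
  have hubt : ∀ x ∈ Icc 0 (δ (b+1)), g (b+1) x ≤ pmax * x := fun x hx => hub _ hmem x hx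
  have intL1 := intLag (t := b+1) hδ hub hpmax0.le hb hC.le hpmin hpp
  have intL2 := intLag (t := b) hδ hub hpmax0.le hbT hC.le hpmin hpp
  have hpt : ∀ u ∈ Icc pmin pmax,
      (Lag g δ (b+1) u C - Lag g δ b u C) / u ^ 2
        ≤ min (Gf (g (b+1)) (δ (b+1)) u) (g (b+1) w) / u ^ 2 := by
    intro u hu
    have hu0 : (0:ℝ) ≤ u := le_trans hpmin.le hu.1
    have hupos : (0:ℝ) < u := lt_of_lt_of_le hpmin hu.1
    have h1 := DeltaL_le_G hδ hub hpmax0.le hC.le hb hu0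
    have h2 := supermod hδ hub hconc hpmax0.le hC.le hb hu0
    rw [← hgw] at h2
    have h3 := le_min h1 h2
    rw [div_eq_mul_inv, div_eq_mul_inv]
    exact mul_le_mul_of_nonneg_right h3 (by positivity)
  have intD : IntervalIntegrable
      (fun u => (Lag g δ (b+1) u C - Lag g δ b u C) / u ^ 2) volume pmin pmax := by
    have h := intL1.sub intL2
    have he : (fun u => (Lag g δ (b+1) u C - Lag g δ b u C) / u ^ 2)
        = fun u => Lag g δ (b+1) u C / u ^ 2 - Lag g δ b u C / u ^ 2 := by
      funext u; rw [sub_div]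
    rw [he]
    exact h
  have intM : IntervalIntegrable
      (fun u => min (Gf (g (b+1)) (δ (b+1)) u) (g (b+1) w) / u ^ 2) volume pmin pmax := by
    have h1 : IntervalIntegrable (fun u => min (Gf (g (b+1)) (δ (b+1)) u) (g (b+1) w))
        volume pmin pmax := by
      refine AntitoneOn.intervalIntegrable ?_
      intro u1 hu1 u2 hu2 h12
      rw [uIcc_of_le hpp] at hu1 hu2
      have h0 : (0:ℝ) ≤ u1 := le_trans hpmin.le hu1.1
      exact min_le_min (Gf_anti hd_t hubt hpmax0.le h0 h12) (le_refl _)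
    have h2 : ContinuousOn (fun u : ℝ => (u ^ 2)⁻¹) (uIcc pmin pmax) := by
      refine ContinuousOn.inv₀ (by fun_prop) ?_
      intro x hx
      rw [uIcc_of_le hpp] at hx
      have : 0 < x := lt_of_lt_of_le hpmin hx.1
      positivity
    simpa only [div_eq_mul_inv] using h1.mul_continuousOn h2
  have hmono := intervalIntegral.integral_mono_on hpp intD intM hpt
  have hkey := slot_key hd_t hpmin hpp hconc_t hder_t hgr_t hg0_t hw
  have hIle : ∫ u in pmin..pmax, (Lag g δ (b+1) u C - Lag g δ b u C) / u ^ 2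
      ≤ g (b+1) w / pmin - w := le_trans hmono hkey
  have hIsub : ∫ u in pmin..pmax, (Lag g δ (b+1) u C - Lag g δ b u C) / u ^ 2
      = (∫ u in pmin..pmax, Lag g δ (b+1) u C / u ^ 2)
        - ∫ u in pmin..pmax, Lag g δ b u C / u ^ 2 := by
    rw [← intervalIntegral.integral_sub intL1 intL2]
    congr 1
    funext u
    rw [sub_div]
  rw [hIsub] at hIle
  have hPsi : Psi g δ C pmin pmax (b + 1) - Psi g δ C pmin pmax b
      = (fopt g δ (b+1) C - fopt g δ b C) / pmin
        - ((∫ u in pmin..pmax, Lag g δ (b+1) u C / u ^ 2)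
          - ∫ u in pmin..pmax, Lag g δ b u C / u ^ 2) := by
    rw [Psi, Psi, sub_div]
    ring
  rw [hPsi, ← hgw]
  linarith


lemma telescope (F : ℕ → ℝ) (n : ℕ) :
    ∑ t ∈ Finset.Icc 1 n, (F t - F (t - 1)) = F n - F 0 := by
  induction n with
  | zero => simp
  | succ m ih =>
      rw [Finset.sum_Icc_succ_top (Nat.le_add_left 1 m), ih]
      simp only [Nat.add_sub_cancel]
      ring

end CRP

theorem stmt_6 (T : ℕ) (C pmin pmax θ π : ℝ)
    (g : ℕ → ℝ → ℝ) (g' : ℕ → ℝ → ℝ) (δ : ℕ → ℝ)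
    (OPT : ℕ → ℝ) (vhat : ℕ → ℝ)
    (hθ : 1 ≤ θ) (hC : 0 < C) (hpmin : 0 < pmin) (hpmax : pmax = θ * pmin)
    (hπ : 1 ≤ π)
    (hδ : ∀ t ∈ Finset.Icc 1 T, 0 ≤ δ t)
    (hconc : ∀ t ∈ Finset.Icc 1 T, ConcaveOn ℝ (Set.Icc 0 (δ t)) (g t))
    (hmono : ∀ t ∈ Finset.Icc 1 T, StrictMonoOn (g t) (Set.Icc 0 (δ t)))
    (hg0 : ∀ t ∈ Finset.Icc 1 T, g t 0 = 0)
    (hderiv : ∀ t ∈ Finset.Icc 1 T, ∀ v ∈ Set.Icc 0 (δ t),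
      HasDerivWithinAt (g t) (g' t v) (Set.Icc 0 (δ t)) v)
    (hgrad : ∀ t ∈ Finset.Icc 1 T, ∀ v ∈ Set.Icc 0 (δ t), g' t v ∈ Set.Icc pmin pmax)
    (hOPT0 : OPT 0 = 0)
    (hOPT : ∀ t ∈ Finset.Icc 1 T,
      IsGreatest {y : ℝ | ∃ v : ℕ → ℝ,
        (∀ τ ∈ Finset.Icc 1 t, v τ ∈ Set.Icc 0 (δ τ)) ∧
        (∑ τ ∈ Finset.Icc 1 t, v τ) ≤ C ∧
        y = ∑ τ ∈ Finset.Icc 1 t, g τ (v τ)} (OPT t))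
    (hpursuit : ∀ t ∈ Finset.Icc 1 T,
      g t (vhat t) = (1 / π) * (OPT t - OPT (t - 1)))
    (hvhat : ∀ t ∈ Finset.Icc 1 T, vhat t ∈ Set.Icc 0 (δ t)) :
    (∑ t ∈ Finset.Icc 1 T, vhat t) ≤ ((Real.log θ + 1) / π) * C := by
  have hπ0 : (0:ℝ) < π := lt_of_lt_of_le one_pos hπ
  have hpp : pmin ≤ pmax := by rw [hpmax]; nlinarith
  have hpmax0 : (0:ℝ) < pmax := lt_of_lt_of_le hpmin hpp
  have hub : ∀ τ ∈ Finset.Icc 1 T, ∀ x ∈ Set.Icc 0 (δ τ), g τ x ≤ pmax * x :=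
    fun τ hτ x hx =>
      (CRP.g_bounds (hconc τ hτ) (hderiv τ hτ) (hgrad τ hτ) (hg0 τ hτ) (hδ τ hτ) hx).2
  have hOPTeq : ∀ t, t ≤ T → OPT t = CRP.fopt g δ t C := by
    intro t ht
    rcases Nat.eq_zero_or_pos t with rfl | hpos
    · rw [hOPT0, CRP.fopt, CRP.Lag_zero_t hC.le]
    · have htm : t ∈ Finset.Icc 1 T := by rw [Finset.mem_Icc]; omega
      have hgreat := hOPT t htm
      have hseteq : {y : ℝ | ∃ v : ℕ → ℝ,
          (∀ τ ∈ Finset.Icc 1 t, v τ ∈ Set.Icc 0 (δ τ)) ∧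
          (∑ τ ∈ Finset.Icc 1 t, v τ) ≤ C ∧
          y = ∑ τ ∈ Finset.Icc 1 t, g τ (v τ)}
          = ((fun v => CRP.Rev g t v - 0 * CRP.Mass t v) '' {v | CRP.Feas δ t C v}) := by
        ext y
        constructor
        · rintro ⟨v, hbox, hmass, rfl⟩
          exact ⟨v, ⟨hbox, hmass⟩, by simp [CRP.Rev]⟩
        · rintro ⟨v, hv, rfl⟩
          exact ⟨v, hv.1, hv.2, by simp [CRP.Rev]⟩
      rw [CRP.fopt, CRP.Lag, ← hseteq]
      exact hgreat.csSup_eq.symm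
  have hstep : ∀ t ∈ Finset.Icc 1 T, π * vhat t ≤
      CRP.Psi g δ C pmin pmax t - CRP.Psi g δ C pmin pmax (t - 1) := by
    intro t htm
    obtain ⟨b, rfl⟩ : ∃ b, t = b + 1 :=
      ⟨t - 1, by have := (Finset.mem_Icc.mp htm).1; omega⟩
    have hb : b + 1 ≤ T := (Finset.mem_Icc.mp htm).2
    simp only [Nat.add_sub_cancel]
    set Δ := OPT (b + 1) - OPT b with hΔdef
    have hOb : OPT b = CRP.fopt g δ b C := hOPTeq b (by omega)
    have hOb1 : OPT (b + 1) = CRP.fopt g δ (b + 1) C := hOPTeq (b + 1) hb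
    have hΔ0 : 0 ≤ Δ := by
      have hmt : CRP.fopt g δ b C ≤ CRP.fopt g δ (b + 1) C :=
        CRP.Lag_mono_t hδ hg0 hub hpmax0.le hb (le_refl (0:ℝ)) hC.le
      rw [hΔdef, hOb, hOb1]
      linarith
    obtain ⟨vopt, hbox, hmass, heq⟩ := (hOPT (b + 1) htm).1
    have hvoptFeas : CRP.Feas δ (b + 1) C vopt := ⟨hbox, hmass⟩
    have hrev' : CRP.Rev g (b + 1) vopt = OPT (b + 1) := heq.symm
    have hvb1 : vopt (b + 1) ∈ Set.Icc 0 (δ (b + 1)) :=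
      hbox _ (by rw [Finset.mem_Icc]; omega)
    have hΔle : Δ ≤ g (b + 1) (vopt (b + 1)) := by
      have h2 : CRP.Rev g b vopt ≤ OPT b := by
        rw [hOb]
        refine CRP.fopt_ge hub hpmax0.le (by omega) ?_
        have hres := CRP.Feas_restrict hvoptFeas
        refine ⟨hres.1, ?_⟩
        have := hres.2
        linarith [hvb1.1]
      have h3 := CRP.Rev_succ (g := g) (b := b) vopt
      rw [hrev'] at h3
      rw [hΔdef]
      linarith
    have hcont : ContinuousOn (g (b + 1)) (Set.Icc 0 (vopt (b + 1))) :=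
      (CRP.slot_cont (hderiv (b + 1) htm)).mono
        (Set.Icc_subset_Icc (le_refl _) hvb1.2)
    have hΔmem : Δ ∈ Set.Icc (g (b + 1) 0) (g (b + 1) (vopt (b + 1))) := by
      rw [hg0 (b + 1) htm]
      exact ⟨hΔ0, hΔle⟩
    obtain ⟨w, hwmem, hgw⟩ := intermediate_value_Icc hvb1.1 hcont hΔmem
    have hw : w ∈ Set.Icc 0 (δ (b + 1)) := ⟨hwmem.1, le_trans hwmem.2 hvb1.2⟩
    have hvh := hvhat (b + 1) htm
    have hpursuit' : g (b + 1) (vhat (b + 1)) = Δ / π := by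
      rw [hpursuit (b + 1) htm]
      simp only [Nat.add_sub_cancel]
      rw [hΔdef]
      ring
    have h0mem : (0:ℝ) ∈ Set.Icc 0 (δ (b + 1)) := ⟨le_refl _, hδ _ htm⟩
    have hπv : π * vhat (b + 1) ≤ w := by
      rcases eq_or_lt_of_le hΔ0 with heq0 | hpos
      · have h0 : g (b + 1) (vhat (b + 1)) = 0 := by
          rw [hpursuit', ← heq0]
          simp
        have hv0 : vhat (b + 1) = 0 := by
          have hinj := (hmono (b + 1) htm).injOn
          refine hinj hvh h0mem ?_
          rw [h0, hg0 (b + 1) htm]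
        rw [hv0, mul_zero]
        exact hw.1
      · have hwpos : 0 < w := by
          rcases eq_or_lt_of_le hw.1 with heq2 | h
          · exfalso
            rw [← heq2] at hgw
            rw [hg0 (b + 1) htm] at hgw
            linarith
          · exact h
        have hvw : vhat (b + 1) ≤ w := by
          by_contra hcon2
          push_neg at hcon2
          have hlt := (hmono (b + 1) htm) hw hvh hcon2
          rw [hgw, hpursuit'] at hlt
          have hle2 : Δ / π ≤ Δ := by
            rw [div_le_iff₀ hπ0]
            nlinarith
          linarith
        have ha0 : 0 ≤ vhat (b + 1) / w := div_nonneg hvh.1 hwpos.le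
        have hb0 : 0 ≤ 1 - vhat (b + 1) / w := by
          rw [sub_nonneg, div_le_one hwpos]
          exact hvw
        have hcc := (hconc (b + 1) htm).2 hw h0mem ha0 hb0 (by ring)
        have hxx : (vhat (b + 1) / w) • w + (1 - vhat (b + 1) / w) • (0:ℝ)
            = vhat (b + 1) := by
          rw [smul_eq_mul, smul_eq_mul, mul_zero, add_zero]
          field_simp
        rw [hxx, hg0 (b + 1) htm, smul_eq_mul, smul_eq_mul, mul_zero, add_zero,
          hgw, hpursuit'] at hcc
        have hcc' : vhat (b + 1) * Δ * π ≤ Δ * w := by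
          rw [div_mul_eq_mul_div, div_le_div_iff₀ hwpos hπ0] at hcc
          linarith
        nlinarith
    have hgw' : g (b + 1) w = CRP.fopt g δ (b + 1) C - CRP.fopt g δ b C := by
      rw [hgw, hΔdef, hOb, hOb1]
    have hPs := CRP.Psi_step hδ hg0 hub hconc hpmin hpp hC hb
      (hderiv (b + 1) htm) (hgrad (b + 1) htm) hw hgw'
    linarith
  have htele := CRP.telescope (CRP.Psi g δ C pmin pmax) T
  have hsum : ∑ t ∈ Finset.Icc 1 T, π * vhat t
      ≤ CRP.Psi g δ C pmin pmax T - CRP.Psi g δ C pmin pmax 0 := by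
    rw [← htele]
    exact Finset.sum_le_sum hstep
  have hPsi0 : CRP.Psi g δ C pmin pmax 0 = 0 := by
    rw [CRP.Psi]
    have h1 : CRP.fopt g δ 0 C = 0 := CRP.Lag_zero_t hC.le
    have h2 : (fun u => CRP.Lag g δ 0 u C / u ^ 2) = fun _ => (0:ℝ) := by
      funext u
      rw [CRP.Lag_zero_t hC.le]
      simp
    rw [show CRP.fopt g δ 0 C = 0 from h1, h2]
    simp
  have hfin := CRP.Psi_final hδ hg0 hub hpmin hpp hC (le_refl T)
  have hθeq : pmax / pmin = θ := by
    rw [hpmax]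
    field_simp
  rw [hθeq] at hfin
  have h1 : π * ∑ t ∈ Finset.Icc 1 T, vhat t ≤ (Real.log θ + 1) * C := by
    rw [Finset.mul_sum]
    calc ∑ t ∈ Finset.Icc 1 T, π * vhat t
        ≤ CRP.Psi g δ C pmin pmax T - CRP.Psi g δ C pmin pmax 0 := hsum
      _ = CRP.Psi g δ C pmin pmax T := by rw [hPsi0]; ring
      _ ≤ (Real.log θ + 1) * C := hfin
  have h2 : ((Real.log θ + 1) / π) * C = ((Real.log θ + 1) * C) / π := by ring
  rw [h2, le_div_iff₀ hπ0]
  linarith
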